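/- Let h: ℝ → ℝ be differentiable with ḣ(t) ≥ -γ(h(t)) for all t, where γ is a locally Lipschitz extended class-K function. If h(0) > 0, then h(t) > 0 for all t ≥ 0. -/

import Mathlib

def ClassKe (γ : ℝ → ℝ) : Prop := Continuous γ ∧ StrictMono γ ∧ γ 0 = 0

theorem comparison_pos (h : ℝ → ℝ) (γ : ℝ → ℝ)
    (hγ : ClassKe γ) (hlip : LocallyLipschitz γ)
    (hdiff : Differentiable ℝ h)
    (hineq : ∀ t : ℝ, deriv h t ≥ -γ (h t))
    (h0 : h 0 > 0) :
    ∀ t : ℝ, t ≥ 0 → h t > 0 := by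
  obtain ⟨hγc, hγm, hγ0⟩ := hγ
  by_contra hcon
  push_neg at hcon
  obtain ⟨t₀, ht₀, ht₀le⟩ := hcon
  set S : Set ℝ := {t | t ∈ Set.Icc 0 t₀ ∧ h t ≤ 0} with hSdef
  have hSne : S.Nonempty := ⟨t₀, ⟨ht₀, le_refl _⟩, ht₀le⟩
  have hSbdd : BddBelow S := ⟨0, fun t ht => ht.1.1⟩
  have hScl : IsClosed S := by
    have : S = Set.Icc 0 t₀ ∩ h ⁻¹' Set.Iic 0 := by
      ext t; simp [hSdef, Set.mem_Icc, and_assoc]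
    rw [this]
    exact isClosed_Icc.inter (isClosed_Iic.preimage hdiff.continuous)
  set T := sInf S with hTdef
  have hTS : T ∈ S := hScl.csInf_mem hSne hSbdd
  have hT0 : 0 ≤ T := hTS.1.1
  have hpos : ∀ t, 0 ≤ t → t < T → 0 < h t := by
    intro t ht htT
    by_contra hh
    push_neg at hh
    have : t ∈ S := ⟨⟨ht, htT.le.trans hTS.1.2⟩, hh⟩
    exact absurd (csInf_le hSbdd this) (not_le.mpr htT)
  have hhT : h T = 0 := by
    rcases lt_trichotomy (h T) 0 with hlt | heq | hgt
    · exfalso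
      have hTpos : 0 < T := by
        rcases hT0.lt_or_eq with hp | hp
        · exact hp
        · exfalso; rw [← hp] at hlt; linarith
      have hmem : (0:ℝ) ∈ Set.Icc (h T) (h 0) := ⟨hlt.le, h0.le⟩
      obtain ⟨c, hc, hc0⟩ :=
        intermediate_value_Icc' hT0 (hdiff.continuous.continuousOn) hmem
      have hcT : c < T := by
        rcases hc.2.lt_or_eq with hlt' | heq'
        · exact hlt'
        · exfalso; rw [heq'] at hc0; linarith
      have := hpos c hc.1 hcT
      linarith
    · exact heq
    · exact absurd hgt (not_lt.mpr hTS.2)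
  have hTpos : 0 < T := by
    rcases hT0.lt_or_eq with hp | hp
    · exact hp
    · exfalso; rw [← hp] at hhT; linarith
  -- local Lipschitz constant of γ near 0
  obtain ⟨K, U, hU, hlipU⟩ := hlip 0
  obtain ⟨ε, hε, hball⟩ := Metric.mem_nhds_iff.mp hU
  -- continuity of h at T
  obtain ⟨δ, hδ, hδε⟩ := Metric.continuousAt_iff.mp (hdiff.continuous.continuousAt (x := T)) ε hε
  set s : ℝ := max (T - δ/2) (T/2) with hsdef
  have hsT : s < T := max_lt (by linarith) (by linarith)
  have hs0 : 0 ≤ s := le_trans (by linarith) (le_max_right _ _)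
  have hkey : ∀ t ∈ Set.Ioo s T, 0 < h t ∧ |h t| < ε := by
    intro t ht
    have ht0 : 0 ≤ t := hs0.trans ht.1.le
    have hht : 0 < h t := hpos t ht0 ht.2
    have hdist : dist t T < δ := by
      rw [Real.dist_eq, abs_of_nonpos (by linarith [ht.2.le])]
      have : T - δ/2 ≤ s := le_max_left _ _
      linarith [ht.1]
    have := hδε hdist
    rw [hhT, Real.dist_eq, sub_zero] at this
    exact ⟨hht, this⟩
  -- on Ioo s T we have deriv h t ≥ -(K * h t)
  have hgronwall : ∀ t ∈ Set.Ioo s T, deriv h t ≥ -((K : ℝ) * h t) := by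
    intro t ht
    obtain ⟨hht, hhε⟩ := hkey t ht
    have hmem : h t ∈ U := hball (by simpa [Metric.mem_ball, Real.dist_eq] using hhε)
    have h0mem : (0:ℝ) ∈ U := hball (Metric.mem_ball_self hε)
    have hd := hlipU.dist_le_mul (h t) hmem 0 h0mem
    rw [Real.dist_eq, Real.dist_eq, sub_zero, hγ0, sub_zero] at hd
    have hγle : γ (h t) ≤ (K : ℝ) * h t := by
      calc γ (h t) ≤ |γ (h t)| := le_abs_self _
        _ ≤ (K : ℝ) * |h t| := hd
        _ = (K : ℝ) * h t := by rw [abs_of_pos hht]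
    have := hineq t
    linarith
  -- Grönwall: g t = h t * exp (K t) is monotone on [s, T]
  set g : ℝ → ℝ := fun t => h t * Real.exp ((K : ℝ) * t) with hgdef
  have hgderiv : ∀ t : ℝ, HasDerivAt g
      (deriv h t * Real.exp ((K:ℝ) * t) + h t * (Real.exp ((K:ℝ) * t) * ((K:ℝ) * 1))) t := by
    intro t
    exact (hdiff t).hasDerivAt.mul (((hasDerivAt_id t).const_mul (K:ℝ)).exp)
  have hmono : MonotoneOn g (Set.Icc s T) := by
    apply monotoneOn_of_deriv_nonneg (convex_Icc s T)
    · exact Continuous.continuousOn (continuous_iff_continuousAt.mpr fun t => (hgderiv t).continuousAt)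
    · rw [interior_Icc]
      exact fun t _ => (hgderiv t).differentiableAt.differentiableWithinAt
    · rw [interior_Icc]
      intro t ht
      rw [(hgderiv t).deriv]
      have h1 := hgronwall t ht
      have h2 := (hkey t ht).1
      have hE : 0 < Real.exp ((K:ℝ) * t) := Real.exp_pos _
      nlinarith
  have hgs : 0 < g s := mul_pos (hpos s hs0 hsT) (Real.exp_pos _)
  have hgT : g T = 0 := by simp [hgdef, hhT]
  have := hmono (Set.left_mem_Icc.mpr hsT.le) (Set.right_mem_Icc.mpr hsT.le) hsT.le
  linarith
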